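/- Let α̂ be any fixed-point-free involution of Y = Fin m × Fin 2 × Bool lying on a geodesic between δ̂ and β̂, i.e. satisfying |δ̂∘α̂| + |α̂∘β̂| = |δ̂∘β̂|. Then there exists a subset Λ ⊆ Fin m such that for every (i, ε, s) ∈ Y: α̂ (i, ε, s) = β̂ (i, ε, s) if i ∈ Λ, and α̂ (i, ε, s) = δ̂ (i, ε, s) if i ∉ Λ. -/

import Mathlib

/-- Number of cycles (orbits of the generated cyclic group, fixed points included). -/
noncomputable def permCycles {X : Type*} (σ : Equiv.Perm X) : ℕ :=
  Nat.card (MulAction.orbitRel.Quotient (Subgroup.zpowers σ) X)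

/-- The length `|σ| = card X - #σ` of a permutation. -/
noncomputable def permLength {X : Type*} (σ : Equiv.Perm X) : ℕ :=
  Nat.card X - permCycles σ

/-- A pairing of `X` is a fixed-point-free involution of `X`. -/
def IsPairing {X : Type*} (α : Equiv.Perm X) : Prop :=
  α * α = 1 ∧ ∀ x, α x ≠ x

/-- The pairing `δ̂ (i, ε, s) = (i, ε, ¬s)` swapping the two sides within each block. -/
def deltaHat (m : ℕ) : Equiv.Perm (Fin m × Fin 2 × Bool) :=
  Function.Involutive.toPerm (fun y => (y.1, y.2.1, !y.2.2)) (fun y => by simp)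

/-- The pairing `β̂ (i, ε, s) = (i, 1 - ε, s)` swapping the two elements of `Fin 2`
on each side of each block. -/
def betaHat (m : ℕ) : Equiv.Perm (Fin m × Fin 2 × Bool) :=
  Function.Involutive.toPerm (fun y => (y.1, 1 - y.2.1, y.2.2))
    (fun y => by
      obtain ⟨i, ε, s⟩ := y
      have h : ∀ e : Fin 2, 1 - (1 - e) = e := by decide
      simp [h])


set_option linter.unusedSectionVars false
set_option maxHeartbeats 1000000
open MulAction Subgroup Equiv

namespace Stmt9Aux

section SetoidCount
variable {X : Type*} [Finite X]

def mapOfLe {s t : Setoid X} (h : s ≤ t) : Quotient s → Quotient t :=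
  Quotient.map' id (fun _ _ hab => Setoid.le_def.mp h hab)

lemma mapOfLe_mk {s t : Setoid X} (h : s ≤ t) (x : X) :
    mapOfLe h (Quotient.mk'' x) = Quotient.mk'' x := rfl

lemma mapOfLe_surj {s t : Setoid X} (h : s ≤ t) : Function.Surjective (mapOfLe h) := by
  intro c
  obtain ⟨x, rfl⟩ := Quotient.exists_rep c
  exact ⟨Quotient.mk'' x, rfl⟩

lemma cardQ_mono {s t : Setoid X} (h : s ≤ t) :
    Nat.card (Quotient t) ≤ Nat.card (Quotient s) :=
  Nat.card_le_card_of_surjective _ (mapOfLe_surj h)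

def pairS (a b : X) : Setoid X :=
  ⟨fun z w => z = w ∨ (z = a ∧ w = b) ∨ (z = b ∧ w = a), by
    constructor
    · intro z; exact Or.inl rfl
    · intro z w h; tauto
    · intro z w v h1 h2; rcases h1 with rfl|⟨rfl,rfl⟩|⟨rfl,rfl⟩ <;>
        rcases h2 with rfl|⟨h,rfl⟩|⟨h,rfl⟩ <;> tauto⟩

def joinPair (t : Setoid X) (a b : X) : Setoid X :=
  ⟨fun z w => t z w ∨ (t z a ∧ t b w) ∨ (t z b ∧ t a w), by
    constructor
    · intro z; exact Or.inl (t.refl z)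
    · intro z w h
      rcases h with h|⟨h1,h2⟩|⟨h1,h2⟩
      · exact Or.inl (t.symm h)
      · exact Or.inr (Or.inr ⟨t.symm h2, t.symm h1⟩)
      · exact Or.inr (Or.inl ⟨t.symm h2, t.symm h1⟩)
    · intro z w v h1 h2
      rcases h1 with h1|⟨h1,h1'⟩|⟨h1,h1'⟩ <;> rcases h2 with h2|⟨h2,h2'⟩|⟨h2,h2'⟩
      · exact Or.inl (t.trans h1 h2)
      · exact Or.inr (Or.inl ⟨t.trans h1 h2, h2'⟩)
      · exact Or.inr (Or.inr ⟨t.trans h1 h2, h2'⟩)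
      · exact Or.inr (Or.inl ⟨h1, t.trans h1' h2⟩)
      · exact Or.inl (t.trans h1 (t.trans (t.symm (t.trans h1' h2)) h2'))
      · exact Or.inl (t.trans h1 h2')
      · exact Or.inr (Or.inr ⟨h1, t.trans h1' h2⟩)
      · exact Or.inl (t.trans h1 h2')
      · exact Or.inl (t.trans h1 (t.trans (t.symm (t.trans h1' h2)) h2'))⟩

lemma joinPair_eq_sup (t : Setoid X) (a b : X) : t ⊔ pairS a b = joinPair t a b := by
  apply le_antisymm
  · apply sup_le
    · intro z w h; exact Or.inl h
    · intro z w h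
      rcases h with rfl|⟨rfl,rfl⟩|⟨rfl,rfl⟩
      · exact Or.inl (t.refl z)
      · exact Or.inr (Or.inl ⟨t.refl _, t.refl _⟩)
      · exact Or.inr (Or.inr ⟨t.refl _, t.refl _⟩)
  · intro z w h
    have hta : t ≤ t ⊔ pairS a b := le_sup_left
    have hpa : pairS a b ≤ t ⊔ pairS a b := le_sup_right
    have hab : (t ⊔ pairS a b) a b := hpa (Or.inr (Or.inl ⟨rfl, rfl⟩))
    rcases h with h|⟨h1,h2⟩|⟨h1,h2⟩
    · exact hta h
    · exact (t ⊔ pairS a b).trans (hta h1) ((t ⊔ pairS a b).trans hab (hta h2))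
    · exact (t ⊔ pairS a b).trans (hta h1)
        ((t ⊔ pairS a b).trans ((t ⊔ pairS a b).symm hab) (hta h2))

lemma merge_card (t : Setoid X) (a b : X) :
    Nat.card (Quotient t) ≤ Nat.card (Quotient (t ⊔ pairS a b)) + 1 := by
  classical
  letI := Fintype.ofFinite X
  letI := Fintype.ofFinite (Quotient t)
  letI := Fintype.ofFinite (Quotient (t ⊔ pairS a b))
  rw [Nat.card_eq_fintype_card, Nat.card_eq_fintype_card]
  have hle : t ≤ t ⊔ pairS a b := le_sup_left
  have key : (Finset.univ.erase (Quotient.mk'' b : Quotient t)).card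
      ≤ Fintype.card (Quotient (t ⊔ pairS a b)) := by
    rw [Fintype.card]
    apply Finset.card_le_card_of_injOn (mapOfLe hle) (fun _ _ => Finset.mem_univ _)
    intro c1 h1 c2 h2 heq
    obtain ⟨z, rfl⟩ := c1.exists_rep
    obtain ⟨w, rfl⟩ := c2.exists_rep
    simp only [Finset.coe_erase, Set.mem_diff, Finset.mem_coe, Set.mem_singleton_iff] at h1 h2
    have hzb : ¬ t z b := fun hh => h1.2 (Quotient.sound hh)
    have hwb : ¬ t w b := fun hh => h2.2 (Quotient.sound hh)
    have hrel : (t ⊔ pairS a b) z w := Quotient.exact heq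
    rw [joinPair_eq_sup] at hrel
    rcases hrel with h|⟨hh1,hh2⟩|⟨hh1,hh2⟩
    · exact Quotient.sound h
    · exact absurd (t.symm hh2) hwb
    · exact absurd hh1 hzb
  have hmem : (Quotient.mk'' b : Quotient t) ∈ (Finset.univ : Finset (Quotient t)) :=
    Finset.mem_univ _
  rw [Finset.card_erase_of_mem hmem, Finset.card_univ] at key
  omega

lemma strict_merge {t : Setoid X} {a b : X} (h : ¬ t a b) :
    Nat.card (Quotient (t ⊔ pairS a b)) < Nat.card (Quotient t) := by
  classical
  letI := Fintype.ofFinite (Quotient t)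
  letI := Fintype.ofFinite (Quotient (t ⊔ pairS a b))
  rw [Nat.card_eq_fintype_card, Nat.card_eq_fintype_card]
  have hle : t ≤ t ⊔ pairS a b := le_sup_left
  apply Fintype.card_lt_of_surjective_not_injective (mapOfLe hle) (mapOfLe_surj hle)
  intro hinj
  have hab : (t ⊔ pairS a b) a b := le_sup_right (α := Setoid X) (Or.inr (Or.inl ⟨rfl, rfl⟩))
  have : (Quotient.mk'' a : Quotient t) = Quotient.mk'' b := hinj (Quotient.sound hab)
  exact h (Quotient.exact this)

lemma setoid_eq_of_card {s t : Setoid X} (h : s ≤ t)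
    (hc : Nat.card (Quotient s) ≤ Nat.card (Quotient t)) : s = t := by
  classical
  letI := Fintype.ofFinite (Quotient s)
  letI := Fintype.ofFinite (Quotient t)
  have hcard : Fintype.card (Quotient s) = Fintype.card (Quotient t) := by
    have := cardQ_mono h
    rw [Nat.card_eq_fintype_card, Nat.card_eq_fintype_card] at this hc
    omega
  have hbij : Function.Bijective (mapOfLe h) :=
    (Fintype.bijective_iff_surjective_and_card _).mpr ⟨mapOfLe_surj h, hcard⟩
  apply le_antisymm h
  intro z w hzw
  have : mapOfLe h (Quotient.mk'' z) = mapOfLe h (Quotient.mk'' w) := by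
    rw [mapOfLe_mk, mapOfLe_mk]
    exact Quotient.sound hzw
  exact Quotient.exact (hbij.1 this)

theorem setoid_semimodular (t r s : Setoid X) (hts : t ≤ s) (htr : t ≤ r) :
    Nat.card (Quotient r) + Nat.card (Quotient s)
      ≤ Nat.card (Quotient (r ⊔ s)) + Nat.card (Quotient t) := by
  suffices H : ∀ n (t r s : Setoid X), t ≤ s → t ≤ r →
      Nat.card (Quotient t) - Nat.card (Quotient s) = n →
      Nat.card (Quotient r) + Nat.card (Quotient s)
        ≤ Nat.card (Quotient (r ⊔ s)) + Nat.card (Quotient t) from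
    H _ t r s hts htr rfl
  intro n
  induction n with
  | zero =>
    intro t r s hts htr hdiff
    have hst : Nat.card (Quotient s) ≤ Nat.card (Quotient t) := cardQ_mono hts
    have : t = s := setoid_eq_of_card hts (by omega)
    subst this
    rw [sup_eq_left.mpr htr]
  | succ n ih =>
    intro t r s hts htr hdiff
    have hst : Nat.card (Quotient s) ≤ Nat.card (Quotient t) := cardQ_mono hts
    have hne : t ≠ s := by
      intro hh; subst hh; omega
    obtain ⟨a, b, hsab, htab⟩ : ∃ a b, s a b ∧ ¬ t a b := by
      by_contra hcon
      push_neg at hcon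
      exact hne (le_antisymm hts (fun z w h => hcon z w h))
    have hpair_s : pairS a b ≤ s := by
      intro z w h
      rcases h with rfl|⟨rfl,rfl⟩|⟨rfl,rfl⟩
      · exact s.refl z
      · exact hsab
      · exact s.symm hsab
    have ht's : t ⊔ pairS a b ≤ s := sup_le hts hpair_s
    have ht'r : t ⊔ pairS a b ≤ r ⊔ pairS a b := sup_le_sup htr le_rfl
    have hlt : Nat.card (Quotient (t ⊔ pairS a b)) < Nat.card (Quotient t) := strict_merge htab
    have hge : Nat.card (Quotient t) ≤ Nat.card (Quotient (t ⊔ pairS a b)) + 1 := merge_card t a b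
    have hst' : Nat.card (Quotient s) ≤ Nat.card (Quotient (t ⊔ pairS a b)) := cardQ_mono ht's
    have hdiff' : Nat.card (Quotient (t ⊔ pairS a b)) - Nat.card (Quotient s) = n := by omega
    have hIH := ih (t ⊔ pairS a b) (r ⊔ pairS a b) s ht's ht'r hdiff'
    have hsup : (r ⊔ pairS a b) ⊔ s = r ⊔ s := by
      rw [sup_assoc, sup_eq_right.mpr hpair_s]
    rw [hsup] at hIH
    have hmr : Nat.card (Quotient r) ≤ Nat.card (Quotient (r ⊔ pairS a b)) + 1 :=
      merge_card r a b
    omega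

end SetoidCount

section GroupOrbit
variable {X : Type*} [Finite X]

lemma orbitRel_le_of_le {H K : Subgroup (Equiv.Perm X)} (h : H ≤ K) :
    orbitRel H X ≤ orbitRel K X := by
  intro z w hzw
  rw [orbitRel_apply] at hzw ⊢
  obtain ⟨⟨g, hg⟩, rfl⟩ := hzw
  exact ⟨⟨g, h hg⟩, rfl⟩

lemma closure_rel (S : Set (Equiv.Perm X)) (r : Setoid X)
    (hr : ∀ s ∈ S, ∀ x, r (s x) x) :
    ∀ g ∈ Subgroup.closure S, ∀ x, r (g x) x := by
  intro g hg
  induction hg using Subgroup.closure_induction with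
  | mem s hs => exact hr s hs
  | one => intro x; exact r.refl x
  | mul a b ha hb iha ihb =>
      intro x
      simp only [Equiv.Perm.mul_apply]
      exact r.trans (iha (b x)) (ihb x)
  | inv a ha iha =>
      intro x
      have := iha (a⁻¹ x)
      rw [show a (a⁻¹ x) = x from a.apply_symm_apply x] at this
      exact r.symm this

lemma orbitRel_closure_le (S : Set (Equiv.Perm X)) (r : Setoid X)
    (hr : ∀ s ∈ S, ∀ x, r (s x) x) :
    orbitRel (Subgroup.closure S) X ≤ r := by
  intro z w hzw
  rw [orbitRel_apply] at hzw
  obtain ⟨⟨g, hg⟩, rfl⟩ := hzw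
  exact closure_rel S r hr g hg w

lemma zpowers_fix {σ : Equiv.Perm X} {x : X} (h : σ x = x) :
    ∀ g ∈ Subgroup.zpowers σ, g x = x := by
  intro g hg
  rw [Subgroup.zpowers_eq_closure] at hg
  induction hg using Subgroup.closure_induction with
  | mem s hs => rw [Set.mem_singleton_iff] at hs; rw [hs]; exact h
  | one => rfl
  | mul a b ha hb iha ihb => simp only [Equiv.Perm.mul_apply, ihb, iha]
  | inv a ha iha =>
      exact (Equiv.Perm.inv_eq_iff_eq).mpr iha.symm

lemma zpowers_pair {σ : Equiv.Perm X} {x y : X} (hxy : σ x = y) (hyx : σ y = x) :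
    ∀ g ∈ Subgroup.zpowers σ, (g x = x ∨ g x = y) ∧ (g y = y ∨ g y = x) := by
  intro g hg
  rw [Subgroup.zpowers_eq_closure] at hg
  induction hg using Subgroup.closure_induction with
  | mem s hs =>
      rw [Set.mem_singleton_iff] at hs; subst hs
      exact ⟨Or.inr hxy, Or.inr hyx⟩
  | one => exact ⟨Or.inl rfl, Or.inl rfl⟩
  | mul a b ha hb iha ihb =>
      constructor
      · rcases ihb.1 with h'|h' <;> simp only [Equiv.Perm.mul_apply, h'] <;> tauto
      · rcases ihb.2 with h'|h' <;> simp only [Equiv.Perm.mul_apply, h'] <;> tauto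
  | inv a ha iha =>
      obtain ⟨h1, h2⟩ := iha
      rcases h1 with h1|h1 <;> rcases h2 with h2|h2
      · exact ⟨Or.inl ((Equiv.Perm.inv_eq_iff_eq).mpr h1.symm),
          Or.inl ((Equiv.Perm.inv_eq_iff_eq).mpr h2.symm)⟩
      · have hxyeq : y = x := a.injective (h2.trans h1.symm)
        subst hxyeq
        exact ⟨Or.inl ((Equiv.Perm.inv_eq_iff_eq).mpr h1.symm),
          Or.inl ((Equiv.Perm.inv_eq_iff_eq).mpr h1.symm)⟩
      · have hxyeq : x = y := a.injective (h1.trans h2.symm)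
        subst hxyeq
        exact ⟨Or.inl ((Equiv.Perm.inv_eq_iff_eq).mpr h2.symm),
          Or.inl ((Equiv.Perm.inv_eq_iff_eq).mpr h2.symm)⟩
      · exact ⟨Or.inr ((Equiv.Perm.inv_eq_iff_eq).mpr h2.symm),
          Or.inr ((Equiv.Perm.inv_eq_iff_eq).mpr h1.symm)⟩

lemma mk_smul_eq {H : Subgroup (Equiv.Perm X)} {g : Equiv.Perm X} (hg : g ∈ H) (x : X) :
    (Quotient.mk'' (g x) : orbitRel.Quotient H X) = Quotient.mk'' x := by
  apply Quotient.sound'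
  rw [orbitRel_apply]
  exact ⟨⟨g, hg⟩, rfl⟩

lemma permCycles_le_card (σ : Equiv.Perm X) : permCycles σ ≤ Nat.card X :=
  Nat.card_le_card_of_surjective (Quotient.mk'' : X → orbitRel.Quotient (zpowers σ) X)
    (fun c => c.exists_rep)

lemma card_eq_two_mul_permCycles {σ : Equiv.Perm X} (h2 : σ * σ = 1)
    (hfp : ∀ x, σ x ≠ x) : Nat.card X = 2 * permCycles σ := by
  have hinv : ∀ x, σ (σ x) = x := by
    intro x
    have := DFunLike.congr_fun h2 x
    simpa using this
  set Q := orbitRel.Quotient (zpowers σ) X with hQ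
  set f : Q × Bool → X := fun cb => if cb.2 then σ cb.1.out else cb.1.out with hf
  have hmk_f : ∀ cb, (Quotient.mk'' (f cb) : Q) = cb.1 := by
    rintro ⟨c, b⟩
    cases b
    · exact c.out_eq'
    · show (Quotient.mk'' (σ c.out) : Q) = c
      rw [mk_smul_eq (Subgroup.mem_zpowers σ)]
      exact c.out_eq'
  have hinj : Function.Injective f := by
    rintro ⟨c, b⟩ ⟨c', b'⟩ heq
    have h1 := hmk_f ⟨c, b⟩
    have h2 := hmk_f ⟨c', b'⟩
    simp only at h1 h2
    have hcc : c = c' := by rw [← h1, heq, h2]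
    subst hcc
    cases b <;> cases b' <;> simp only [hf] at heq <;> simp at heq ⊢
    · exact (hfp _ heq.symm).elim
    · exact (hfp _ heq).elim
  have hsurj : Function.Surjective f := by
    intro x
    have hrel : x ∈ orbit (zpowers σ) (Quotient.mk'' x : Q).out := by
      rw [← orbitRel_apply]
      exact Quotient.exact' (Quotient.mk'' x : Q).out_eq'.symm
    rw [MulAction.mem_orbit_iff] at hrel
    obtain ⟨⟨g, hg⟩, hgx⟩ := hrel
    have hpair := (zpowers_pair (x := (Quotient.mk'' x : Q).out) rfl
      (hinv (Quotient.mk'' x : Q).out) g hg).1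
    have hgx' : g (Quotient.mk'' x : Q).out = x := hgx
    rcases hpair with h|h
    · refine ⟨⟨Quotient.mk'' x, false⟩, ?_⟩
      show (Quotient.mk'' x : Q).out = x
      exact h.symm.trans hgx'
    · refine ⟨⟨Quotient.mk'' x, true⟩, ?_⟩
      show σ (Quotient.mk'' x : Q).out = x
      exact h.symm.trans hgx'
  have hcard := Nat.card_congr (Equiv.ofBijective f ⟨hinj, hsurj⟩)
  rw [Nat.card_prod, Nat.card_eq_fintype_card (α := Bool)] at hcard
  simp only [Fintype.card_bool] at hcard
  rw [permCycles, ← hQ]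
  omega

lemma dihedral_le {p q : Equiv.Perm X} (hp : p * p = 1) (hq : q * q = 1) :
    permCycles (p * q)
      ≤ 2 * Nat.card (Quotient (orbitRel (Subgroup.closure {p, q}) X)) := by
  have hpinv : p⁻¹ = p := inv_eq_of_mul_eq_one_right hp
  have hqinv : q⁻¹ = q := inv_eq_of_mul_eq_one_right hq
  set σ := p * q with hσ
  have hpσp : p * σ * p = σ⁻¹ := by
    rw [hσ, mul_inv_rev, hpinv, hqinv, ← mul_assoc, hp, one_mul]
  have hconj : ∀ k : ℤ, p * σ ^ k * p = σ ^ (-k) := by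
    intro k
    calc p * σ ^ k * p = p * σ ^ k * p⁻¹ := by rw [hpinv]
    _ = (p * σ * p⁻¹) ^ k := by rw [conj_zpow]
    _ = (σ⁻¹) ^ k := by rw [hpinv, hpσp]
    _ = σ ^ (-k) := by rw [inv_zpow, zpow_neg]
  have hswap : ∀ k : ℤ, p * σ ^ k = σ ^ (-k) * p := by
    intro k
    calc p * σ ^ k = (p * σ ^ k * p) * p := by rw [mul_assoc, hp, mul_one]
    _ = σ ^ (-k) * p := by rw [hconj k]
  set K : Subgroup (Equiv.Perm X) :=
    { carrier := {g | ∃ k : ℤ, g = σ ^ k ∨ g = σ ^ k * p}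
      one_mem' := ⟨0, Or.inl (by simp)⟩
      mul_mem' := by
        rintro g h ⟨k, hk | hk⟩ ⟨l, hl | hl⟩ <;> subst hk <;> subst hl
        · exact ⟨k + l, Or.inl (zpow_add σ k l).symm⟩
        · exact ⟨k + l, Or.inr (by rw [← mul_assoc, ← zpow_add])⟩
        · refine ⟨k + (-l), Or.inr ?_⟩
          calc σ ^ k * p * σ ^ l = σ ^ k * (p * σ ^ l) := by group
          _ = σ ^ k * (σ ^ (-l) * p) := by rw [hswap l]
          _ = σ ^ (k + -l) * p := by rw [← mul_assoc, ← zpow_add]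
        · refine ⟨k + (-l), Or.inl ?_⟩
          calc σ ^ k * p * (σ ^ l * p) = σ ^ k * ((p * σ ^ l) * p) := by group
          _ = σ ^ k * ((σ ^ (-l) * p) * p) := by rw [hswap l]
          _ = σ ^ k * (σ ^ (-l) * (p * p)) := by group
          _ = σ ^ k * σ ^ (-l) := by rw [hp, mul_one]
          _ = σ ^ (k + -l) := (zpow_add σ k (-l)).symm
      inv_mem' := by
        rintro g ⟨k, hk | hk⟩ <;> subst hk
        · exact ⟨-k, Or.inl (by rw [zpow_neg])⟩
        · refine ⟨k, Or.inr ?_⟩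
          calc (σ ^ k * p)⁻¹ = p⁻¹ * (σ ^ k)⁻¹ := mul_inv_rev _ _
          _ = p * σ ^ (-k) := by rw [hpinv, ← zpow_neg]
          _ = σ ^ (- -k) * p := hswap (-k)
          _ = σ ^ k * p := by rw [neg_neg] } with hK
  have hqK : q = σ ^ (-1 : ℤ) * p := by
    rw [zpow_neg_one, hσ, mul_inv_rev, hpinv, hqinv, mul_assoc, hp, mul_one]
  have hKle : Subgroup.closure {p, q} ≤ K := by
    rw [Subgroup.closure_le]
    intro g hg
    simp only [Set.mem_insert_iff, Set.mem_singleton_iff] at hg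
    rcases hg with h | h
    · exact ⟨0, Or.inr (by rw [h, zpow_zero, one_mul])⟩
    · exact ⟨-1, Or.inr (by rw [h, hqK])⟩
  set r := orbitRel (Subgroup.closure {p, q}) X with hr
  have hsurj : ∀ c : orbitRel.Quotient (zpowers σ) X,
      ∃ cb : Quotient r × Bool,
        (Quotient.mk'' (if cb.2 then p cb.1.out else cb.1.out)
          : orbitRel.Quotient (zpowers σ) X) = c := by
    intro c
    obtain ⟨x, hx⟩ := c.exists_rep
    have hrel : x ∈ orbit (Subgroup.closure {p, q}) (Quotient.mk'' x : Quotient r).out := by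
      rw [← orbitRel_apply]
      exact Quotient.exact' (Quotient.mk'' x : Quotient r).out_eq'.symm
    rw [MulAction.mem_orbit_iff] at hrel
    obtain ⟨⟨g, hg⟩, hgx⟩ := hrel
    set z := (Quotient.mk'' x : Quotient r).out with hz
    have hgx' : g z = x := hgx
    obtain ⟨k, hk | hk⟩ := hKle hg <;> subst hk
    · refine ⟨⟨Quotient.mk'' x, false⟩, ?_⟩
      have h1 := mk_smul_eq (H := zpowers σ) (Subgroup.mem_zpowers_iff.mpr ⟨k, rfl⟩) z
      rw [hgx'] at h1
      rw [← hx]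
      exact h1.symm
    · refine ⟨⟨Quotient.mk'' x, true⟩, ?_⟩
      have happ : (σ ^ k) (p z) = x := by rw [← hgx']; rfl
      have h1 := mk_smul_eq (H := zpowers σ) (Subgroup.mem_zpowers_iff.mpr ⟨k, rfl⟩) (p z)
      rw [happ] at h1
      rw [← hx]
      exact h1.symm
  have := Nat.card_le_card_of_surjective
    (fun cb : Quotient r × Bool =>
      (Quotient.mk'' (if cb.2 then p cb.1.out else cb.1.out)
        : orbitRel.Quotient (zpowers σ) X)) hsurj
  rw [Nat.card_prod, Nat.card_eq_fintype_card (α := Bool), Fintype.card_bool] at this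
  rw [permCycles]
  have h2 : Nat.card (orbitRel.Quotient (zpowers σ) X)
      = Nat.card (Quotient (orbitRel (zpowers σ) X)) := rfl
  omega

end GroupOrbit

end Stmt9Aux


namespace Stmt9Aux

section Main
variable {m : ℕ}


lemma delta_apply (y : (Fin m × Fin 2 × Bool)) : deltaHat m y = (y.1, y.2.1, !y.2.2) := rfl

lemma beta_apply (y : (Fin m × Fin 2 × Bool)) : betaHat m y = (y.1, 1 - y.2.1, y.2.2) := rfl

lemma fin2_cases : ∀ v : Fin 2, v = 0 ∨ v = 1 := by decide

lemma fin2_sub_sub : ∀ v : Fin 2, 1 - (1 - v) = v := by decide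

lemma delta_sq : deltaHat m * deltaHat m = 1 := by
  apply Equiv.ext
  rintro ⟨i, ε, s⟩
  simp [Equiv.Perm.mul_apply, delta_apply]

lemma beta_sq : betaHat m * betaHat m = 1 := by
  apply Equiv.ext
  rintro ⟨i, ε, s⟩
  simp [Equiv.Perm.mul_apply, beta_apply, fin2_sub_sub]

lemma db_sq : (deltaHat m * betaHat m) * (deltaHat m * betaHat m) = 1 := by
  apply Equiv.ext
  rintro ⟨i, ε, s⟩
  simp [Equiv.Perm.mul_apply, beta_apply, delta_apply, fin2_sub_sub]

lemma db_fp : ∀ y : (Fin m × Fin 2 × Bool), (deltaHat m * betaHat m) y ≠ y := by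
  rintro ⟨i, ε, s⟩ h
  rw [Equiv.Perm.mul_apply, beta_apply, delta_apply] at h
  have := congrArg (fun z : (Fin m × Fin 2 × Bool) => z.2.2) h
  simpa using this

lemma cardY : Nat.card (Fin m × Fin 2 × Bool) = 4 * m := by
  simp [Nat.card_eq_fintype_card]
  ring

/-- Trichotomy for a block-preserving pairing on a block. -/
lemma block_cases (α : Equiv.Perm (Fin m × Fin 2 × Bool)) (αinv : ∀ y, α (α y) = y)
    (hfp : ∀ y, α y ≠ y) (hbl : ∀ y : (Fin m × Fin 2 × Bool), (α y).1 = y.1) (i : Fin m) :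
    (∀ (ε : Fin 2) (s : Bool), α (i, ε, s) = (i, ε, !s)) ∨
    (∀ (ε : Fin 2) (s : Bool), α (i, ε, s) = (i, 1 - ε, s)) ∨
    (∀ (ε : Fin 2) (s : Bool), α (i, ε, s) = (i, 1 - ε, !s)) := by
  have hval : ∀ (ε : Fin 2) (s : Bool),
      α (i, ε, s) = (i, 0, false) ∨ α (i, ε, s) = (i, 0, true) ∨
      α (i, ε, s) = (i, 1, false) ∨ α (i, ε, s) = (i, 1, true) := by
    intro ε s
    have h1 : (α (i, ε, s)).1 = i := hbl (i, ε, s)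
    have h2 : α (i, ε, s) = ((α (i, ε, s)).1, (α (i, ε, s)).2.1, (α (i, ε, s)).2.2) := rfl
    rw [h1] at h2
    rcases fin2_cases (α (i, ε, s)).2.1 with h3 | h3 <;>
      cases hb : (α (i, ε, s)).2.2 <;> rw [h3, hb] at h2 <;> tauto
  have hinj := α.injective
  -- value at (i,0,false)
  rcases hval 0 false with h00 | h00 | h00 | h00
  · exact absurd h00 (hfp (i, 0, false))
  · -- δ case
    left
    have e1 : α (i, 0, true) = (i, 0, false) := by rw [← h00]; exact αinv _
    have e2 : α (i, 1, false) = (i, 1, true) := by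
      rcases hval 1 false with h | h | h | h
      · exact absurd (hinj (h.trans e1.symm)) (by simp)
      · exact absurd (hinj (h.trans h00.symm)) (by simp)
      · exact absurd h (hfp _)
      · exact h
    have e3 : α (i, 1, true) = (i, 1, false) := by rw [← e2]; exact αinv _
    intro ε s
    rcases fin2_cases ε with rfl | rfl <;> cases s <;> simpa using by
      first
        | exact h00
        | exact e1
        | exact e2
        | exact e3
  · -- β case
    right; left
    have e1 : α (i, 1, false) = (i, 0, false) := by rw [← h00]; exact αinv _
    have e2 : α (i, 0, true) = (i, 1, true) := by
      rcases hval 0 true with h | h | h | h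
      · exact absurd (hinj (h.trans e1.symm)) (by simp)
      · exact absurd h (hfp _)
      · exact absurd (hinj (h.trans h00.symm)) (by simp)
      · exact h
    have e3 : α (i, 1, true) = (i, 0, true) := by rw [← e2]; exact αinv _
    intro ε s
    rcases fin2_cases ε with rfl | rfl <;> cases s <;> first
      | (show α (i, 0, false) = (i, 1 - 0, false); rw [h00]; rfl)
      | (show α (i, 0, true) = (i, 1 - 0, true); rw [e2]; rfl)
      | (show α (i, 1, false) = (i, 1 - 1, false); rw [e1]; rfl)
      | (show α (i, 1, true) = (i, 1 - 1, true); rw [e3]; rfl)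
  · -- γ case
    right; right
    have e1 : α (i, 1, true) = (i, 0, false) := by rw [← h00]; exact αinv _
    have e2 : α (i, 0, true) = (i, 1, false) := by
      rcases hval 0 true with h | h | h | h
      · exact absurd (hinj (h.trans e1.symm)) (by simp)
      · exact absurd h (hfp _)
      · exact h
      · exact absurd (hinj (h.trans h00.symm)) (by simp)
    have e3 : α (i, 1, false) = (i, 0, true) := by rw [← e2]; exact αinv _
    intro ε s
    rcases fin2_cases ε with rfl | rfl <;> cases s <;> first
      | (show α (i, 0, false) = (i, 1 - 0, !false); rw [h00]; rfl)
      | (show α (i, 0, true) = (i, 1 - 0, !true); rw [e2]; rfl)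
      | (show α (i, 1, false) = (i, 1 - 1, !false); rw [e3]; rfl)
      | (show α (i, 1, true) = (i, 1 - 1, !true); rw [e1]; rfl)

section Fiber
variable (σ : Equiv.Perm (Fin m × Fin 2 × Bool)) (hbl : ∀ y : (Fin m × Fin 2 × Bool), (σ y).1 = y.1)

/-- Projection of σ-orbit classes to the block index. -/
def projQ : Quotient (orbitRel (zpowers σ) (Fin m × Fin 2 × Bool)) → Fin m :=
  Quotient.lift (fun y : (Fin m × Fin 2 × Bool) => y.1) (by
    intro a b hab
    have hab' : a ∈ orbit (zpowers σ) b := hab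
    rw [MulAction.mem_orbit_iff] at hab'
    rename' hab' => hab
    obtain ⟨⟨g, hg⟩, rfl⟩ := hab
    have hker := closure_rel {σ} (Setoid.ker (fun y : (Fin m × Fin 2 × Bool) => y.1))
      (by
        rintro s hs x
        rw [Set.mem_singleton_iff] at hs
        subst hs
        exact hbl x) g (by rwa [← Subgroup.zpowers_eq_closure])
    exact hker b)

lemma projQ_mk (y : (Fin m × Fin 2 × Bool)) : projQ σ hbl (Quotient.mk'' y) = y.1 := rfl

lemma class_eq_of_pair {x y u : (Fin m × Fin 2 × Bool)} (hxy : σ x = y) (hyx : σ y = x)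
    (h : (Quotient.mk'' x : Quotient (orbitRel (zpowers σ) (Fin m × Fin 2 × Bool))) = Quotient.mk'' u) :
    u = x ∨ u = y := by
  have hrel0 := Quotient.exact' h.symm
  have hrel : u ∈ orbit (zpowers σ) x := hrel0
  rw [MulAction.mem_orbit_iff] at hrel
  obtain ⟨⟨g, hg⟩, hgu⟩ := hrel
  have := (zpowers_pair hxy hyx g hg).1
  rcases this with hh | hh
  · left; rw [← hgu]; exact hh
  · right; rw [← hgu]; exact hh

lemma fiber_four [DecidableEq (Quotient (orbitRel (zpowers σ) (Fin m × Fin 2 × Bool)))]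
    [Fintype (Quotient (orbitRel (zpowers σ) (Fin m × Fin 2 × Bool)))]
    (i : Fin m) (hfix : ∀ p : Fin 2 × Bool, σ (i, p.1, p.2) = (i, p.1, p.2)) :
    (Finset.univ.filter (fun c : Quotient (orbitRel (zpowers σ) (Fin m × Fin 2 × Bool)) =>
      projQ σ hbl c = i)).card = 4 := by
  have hdist : ∀ p p' : Fin 2 × Bool,
      (Quotient.mk'' ((i, p.1, p.2) : (Fin m × Fin 2 × Bool)) : Quotient (orbitRel (zpowers σ) (Fin m × Fin 2 × Bool)))
        = Quotient.mk'' ((i, p'.1, p'.2) : (Fin m × Fin 2 × Bool)) → p = p' := by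
    intro p p' h
    rcases class_eq_of_pair σ (hfix p) (hfix p) h with hh | hh <;>
    · have h1 := congrArg (fun z : (Fin m × Fin 2 × Bool) => z.2.1) hh
      have h2 := congrArg (fun z : (Fin m × Fin 2 × Bool) => z.2.2) hh
      simp only [] at h1 h2
      exact Prod.ext h1.symm h2.symm
  have hset : Finset.univ.filter (fun c : Quotient (orbitRel (zpowers σ) (Fin m × Fin 2 × Bool)) =>
      projQ σ hbl c = i)
      = {(Quotient.mk'' ((i, 0, false) : (Fin m × Fin 2 × Bool)) : Quotient (orbitRel (zpowers σ) (Fin m × Fin 2 × Bool))),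
         Quotient.mk'' ((i, 0, true) : (Fin m × Fin 2 × Bool)), Quotient.mk'' ((i, 1, false) : (Fin m × Fin 2 × Bool)),
         Quotient.mk'' ((i, 1, true) : (Fin m × Fin 2 × Bool))} := by
    ext c
    simp only [Finset.mem_filter, Finset.mem_univ, true_and, Finset.mem_insert,
      Finset.mem_singleton]
    constructor
    · intro hc
      obtain ⟨y, rfl⟩ := c.exists_rep
      have hy : y.1 = i := hc
      have hy2 : y = (i, y.2.1, y.2.2) := by rw [← hy]
      rcases fin2_cases y.2.1 with h1 | h1 <;> cases h2 : y.2.2 <;>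
        rw [h1, h2] at hy2 <;> rw [hy2] <;>
        first
          | exact Or.inl rfl
          | exact Or.inr (Or.inl rfl)
          | exact Or.inr (Or.inr (Or.inl rfl))
          | exact Or.inr (Or.inr (Or.inr rfl))
    · intro hc
      rcases hc with rfl | rfl | rfl | rfl <;> rfl
  rw [hset]
  rw [Finset.card_insert_of_notMem, Finset.card_insert_of_notMem,
    Finset.card_insert_of_notMem, Finset.card_singleton]
  · simp only [Finset.mem_singleton]
    intro h; exact absurd (hdist (1, false) (1, true) h) (by decide)
  · simp only [Finset.mem_insert, Finset.mem_singleton]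
    rintro (h | h)
    · exact absurd (hdist (0, true) (1, false) h) (by decide)
    · exact absurd (hdist (0, true) (1, true) h) (by decide)
  · simp only [Finset.mem_insert, Finset.mem_singleton]
    rintro (h | h | h)
    · exact absurd (hdist (0, false) (0, true) h) (by decide)
    · exact absurd (hdist (0, false) (1, false) h) (by decide)
    · exact absurd (hdist (0, false) (1, true) h) (by decide)

lemma fiber_two [DecidableEq (Quotient (orbitRel (zpowers σ) (Fin m × Fin 2 × Bool)))]
    [Fintype (Quotient (orbitRel (zpowers σ) (Fin m × Fin 2 × Bool)))]
    (i : Fin m) (u v u' v' : Fin 2 × Bool)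
    (hcover : ∀ p : Fin 2 × Bool, p = u ∨ p = v ∨ p = u' ∨ p = v')
    (hd1 : u ≠ u') (hd2 : u ≠ v') (hd3 : v ≠ u') (hd4 : v ≠ v')
    (huv : σ (i, u.1, u.2) = (i, v.1, v.2)) (hvu : σ (i, v.1, v.2) = (i, u.1, u.2))
    (hu'v' : σ (i, u'.1, u'.2) = (i, v'.1, v'.2))
    (hv'u' : σ (i, v'.1, v'.2) = (i, u'.1, u'.2)) :
    (Finset.univ.filter (fun c : Quotient (orbitRel (zpowers σ) (Fin m × Fin 2 × Bool)) =>
      projQ σ hbl c = i)).card = 2 := by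
  have hmemz : σ ∈ zpowers σ := Subgroup.mem_zpowers σ
  have hclass : ∀ p : Fin 2 × Bool,
      (Quotient.mk'' ((i, p.1, p.2) : (Fin m × Fin 2 × Bool)) : Quotient (orbitRel (zpowers σ) (Fin m × Fin 2 × Bool)))
        = Quotient.mk'' ((i, u.1, u.2) : (Fin m × Fin 2 × Bool)) ∨
      (Quotient.mk'' ((i, p.1, p.2) : (Fin m × Fin 2 × Bool)) : Quotient (orbitRel (zpowers σ) (Fin m × Fin 2 × Bool)))
        = Quotient.mk'' ((i, u'.1, u'.2) : (Fin m × Fin 2 × Bool)) := by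
    intro p
    rcases hcover p with rfl | rfl | rfl | rfl
    · exact Or.inl rfl
    · left
      rw [← huv]
      exact mk_smul_eq hmemz _
    · exact Or.inr rfl
    · right
      rw [← hu'v']
      exact mk_smul_eq hmemz _
  have hset : Finset.univ.filter (fun c : Quotient (orbitRel (zpowers σ) (Fin m × Fin 2 × Bool)) =>
      projQ σ hbl c = i)
      = {(Quotient.mk'' ((i, u.1, u.2) : (Fin m × Fin 2 × Bool)) : Quotient (orbitRel (zpowers σ) (Fin m × Fin 2 × Bool))),
         Quotient.mk'' ((i, u'.1, u'.2) : (Fin m × Fin 2 × Bool))} := by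
    ext c
    simp only [Finset.mem_filter, Finset.mem_univ, true_and, Finset.mem_insert,
      Finset.mem_singleton]
    constructor
    · intro hc
      obtain ⟨y, rfl⟩ := c.exists_rep
      have hy : y.1 = i := hc
      have hy2 : y = (i, y.2.1, y.2.2) := by rw [← hy]
      have hcl := hclass (y.2.1, y.2.2)
      rw [← hy2] at hcl
      exact hcl
    · intro hc
      rcases hc with rfl | rfl <;> rfl
  rw [hset, Finset.card_insert_of_notMem, Finset.card_singleton]
  simp only [Finset.mem_singleton]
  intro h
  rcases class_eq_of_pair σ huv hvu h with hh | hh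
  · apply hd1
    have h1 := congrArg (fun z : (Fin m × Fin 2 × Bool) => z.2.1) hh
    have h2 := congrArg (fun z : (Fin m × Fin 2 × Bool) => z.2.2) hh
    exact Prod.ext h1.symm h2.symm
  · apply hd3
    have h1 := congrArg (fun z : (Fin m × Fin 2 × Bool) => z.2.1) hh
    have h2 := congrArg (fun z : (Fin m × Fin 2 × Bool) => z.2.2) hh
    exact Prod.ext h1.symm h2.symm

end Fiber

end Main

end Stmt9Aux

theorem stmt9 (m : ℕ) (hm : 1 ≤ m) (αh : Equiv.Perm (Fin m × Fin 2 × Bool))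
    (hα : IsPairing αh)
    (hgeo : permLength (deltaHat m * αh) + permLength (αh * betaHat m)
      = permLength (deltaHat m * betaHat m)) :
    ∃ Λ : Finset (Fin m), ∀ (i : Fin m) (ε : Fin 2) (s : Bool),
      (i ∈ Λ → αh (i, ε, s) = betaHat m (i, ε, s)) ∧
      (i ∉ Λ → αh (i, ε, s) = deltaHat m (i, ε, s)) := by
  obtain ⟨hα2, hαfp⟩ := hα
  have αinv : ∀ y, αh (αh y) = y := by
    intro y
    have := DFunLike.congr_fun hα2 y
    simpa using this
  classical
  -- Step 1 : convert the geodesic hypothesis into a cycle-count identity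
  have hcY : Nat.card (Fin m × Fin 2 × Bool) = 4 * m := Stmt9Aux.cardY
  have hdb := Stmt9Aux.card_eq_two_mul_permCycles (Stmt9Aux.db_sq (m := m)) Stmt9Aux.db_fp
  have ha_le := Stmt9Aux.permCycles_le_card (deltaHat m * αh)
  have hb_le := Stmt9Aux.permCycles_le_card (αh * betaHat m)
  rw [hcY] at hdb ha_le hb_le
  have hab : permCycles (deltaHat m * αh) + permCycles (αh * betaHat m) = 6 * m := by
    unfold permLength at hgeo
    rw [hcY] at hgeo
    omega
  -- membership facts
  have hδT : deltaHat m ∈ Subgroup.closure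
      ({deltaHat m, αh, betaHat m} : Set (Equiv.Perm (Fin m × Fin 2 × Bool))) :=
    Subgroup.subset_closure (by simp)
  have hαT : αh ∈ Subgroup.closure
      ({deltaHat m, αh, betaHat m} : Set (Equiv.Perm (Fin m × Fin 2 × Bool))) :=
    Subgroup.subset_closure (by simp)
  have hβT : betaHat m ∈ Subgroup.closure
      ({deltaHat m, αh, betaHat m} : Set (Equiv.Perm (Fin m × Fin 2 × Bool))) :=
    Subgroup.subset_closure (by simp)
  -- dihedral bounds
  have hDa := Stmt9Aux.dihedral_le (Stmt9Aux.delta_sq (m := m)) hα2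
  have hDb := Stmt9Aux.dihedral_le hα2 (Stmt9Aux.beta_sq (m := m))
  -- the pairing αh has 2m orbits
  have hA := Stmt9Aux.card_eq_two_mul_permCycles hα2 hαfp
  rw [hcY] at hA
  -- semimodularity
  have ht1 : orbitRel (zpowers αh) (Fin m × Fin 2 × Bool)
      ≤ orbitRel (Subgroup.closure {deltaHat m, αh}) (Fin m × Fin 2 × Bool) :=
    Stmt9Aux.orbitRel_le_of_le (Subgroup.zpowers_le.mpr (Subgroup.subset_closure (by simp)))
  have ht2 : orbitRel (zpowers αh) (Fin m × Fin 2 × Bool)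
      ≤ orbitRel (Subgroup.closure {αh, betaHat m}) (Fin m × Fin 2 × Bool) :=
    Stmt9Aux.orbitRel_le_of_le (Subgroup.zpowers_le.mpr (Subgroup.subset_closure (by simp)))
  have hSM := Stmt9Aux.setoid_semimodular (orbitRel (zpowers αh) (Fin m × Fin 2 × Bool))
    (orbitRel (Subgroup.closure {deltaHat m, αh}) (Fin m × Fin 2 × Bool))
    (orbitRel (Subgroup.closure {αh, betaHat m}) (Fin m × Fin 2 × Bool)) ht2 ht1
  have hsup : orbitRel (Subgroup.closure {deltaHat m, αh}) (Fin m × Fin 2 × Bool)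
        ⊔ orbitRel (Subgroup.closure {αh, betaHat m}) (Fin m × Fin 2 × Bool)
      = orbitRel (Subgroup.closure {deltaHat m, αh, betaHat m}) (Fin m × Fin 2 × Bool) := by
    apply le_antisymm
    · apply sup_le
      · exact Stmt9Aux.orbitRel_le_of_le (Subgroup.closure_mono (by
          intro g hg
          simp only [Set.mem_insert_iff, Set.mem_singleton_iff] at hg ⊢
          tauto))
      · exact Stmt9Aux.orbitRel_le_of_le (Subgroup.closure_mono (by
          intro g hg
          simp only [Set.mem_insert_iff, Set.mem_singleton_iff] at hg ⊢
          tauto))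
    · apply Stmt9Aux.orbitRel_closure_le
      intro g hg x
      simp only [Set.mem_insert_iff, Set.mem_singleton_iff] at hg
      have hmem : g ∈ Subgroup.closure {deltaHat m, αh}
          ∨ g ∈ Subgroup.closure {αh, betaHat m} := by
        rcases hg with h | h | h
        · exact Or.inl (Subgroup.subset_closure (by simp [h]))
        · exact Or.inl (Subgroup.subset_closure (by simp [h]))
        · exact Or.inr (Subgroup.subset_closure (by simp [h]))
      rcases hmem with h | h
      · exact le_sup_left (α := Setoid (Fin m × Fin 2 × Bool))
          (orbitRel_apply.mpr ⟨⟨g, h⟩, rfl⟩)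
      · exact le_sup_right (α := Setoid (Fin m × Fin 2 × Bool))
          (orbitRel_apply.mpr ⟨⟨g, h⟩, rfl⟩)
  rw [hsup] at hSM
  -- every point of a block is T-related to the base point of the block
  have hone : (1 - (0 : Fin 2)) = 1 := by decide
  have hzero : (1 - (1 : Fin 2)) = 0 := by decide
  have hblockrel : ∀ (i : Fin m) (ε : Fin 2) (s : Bool),
      (Quotient.mk'' ((i, ε, s) : Fin m × Fin 2 × Bool)
        : Quotient (orbitRel (Subgroup.closure {deltaHat m, αh, betaHat m})
            (Fin m × Fin 2 × Bool)))
      = Quotient.mk'' ((i, 0, false) : Fin m × Fin 2 × Bool) := by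
    intro i ε s
    rcases Stmt9Aux.fin2_cases ε with rfl | rfl <;> cases s
    · rfl
    · have h1 : ((i, (0 : Fin 2), true) : Fin m × Fin 2 × Bool)
          = deltaHat m (i, 0, false) := rfl
      rw [h1, Stmt9Aux.mk_smul_eq hδT]
    · have h1 : ((i, (1 : Fin 2), false) : Fin m × Fin 2 × Bool)
          = betaHat m (i, 0, false) := by
        rw [Stmt9Aux.beta_apply]
        rw [show ((i, (0:Fin 2), false) : Fin m × Fin 2 × Bool).2.1 = (0:Fin 2) from rfl]
        rw [hone]
      rw [h1, Stmt9Aux.mk_smul_eq hβT]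
    · have h1 : ((i, (1 : Fin 2), true) : Fin m × Fin 2 × Bool)
          = deltaHat m (betaHat m (i, 0, false)) := by
        rw [Stmt9Aux.beta_apply]
        rw [show ((i, (0:Fin 2), false) : Fin m × Fin 2 × Bool).2.1 = (0:Fin 2) from rfl]
        rw [hone]
        rfl
      rw [h1, Stmt9Aux.mk_smul_eq hδT, Stmt9Aux.mk_smul_eq hβT]
  -- the number of orbits of the full group is at most m
  have hfsurj : Function.Surjective (fun i : Fin m =>
      (Quotient.mk'' ((i, 0, false) : Fin m × Fin 2 × Bool)
        : Quotient (orbitRel (Subgroup.closure {deltaHat m, αh, betaHat m})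
            (Fin m × Fin 2 × Bool)))) := by
    intro c
    obtain ⟨y, hy⟩ := c.exists_rep
    refine ⟨y.1, ?_⟩
    rw [← hy]
    exact (hblockrel y.1 y.2.1 y.2.2).symm
  have hJle : Nat.card (Quotient (orbitRel (Subgroup.closure {deltaHat m, αh, betaHat m})
      (Fin m × Fin 2 × Bool))) ≤ m := by
    have := Nat.card_le_card_of_surjective _ hfsurj
    simpa [Nat.card_eq_fintype_card] using this
  have hAt : permCycles αh
      = Nat.card (Quotient (orbitRel (zpowers αh) (Fin m × Fin 2 × Bool))) := rfl
  have hJ : Nat.card (Quotient (orbitRel (Subgroup.closure {deltaHat m, αh, betaHat m})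
      (Fin m × Fin 2 × Bool))) = m := by omega
  -- block preservation of αh
  letI : Fintype (Quotient (orbitRel (Subgroup.closure {deltaHat m, αh, betaHat m})
      (Fin m × Fin 2 × Bool))) := Fintype.ofFinite _
  have hfbij : Function.Bijective (fun i : Fin m =>
      (Quotient.mk'' ((i, 0, false) : Fin m × Fin 2 × Bool)
        : Quotient (orbitRel (Subgroup.closure {deltaHat m, αh, betaHat m})
            (Fin m × Fin 2 × Bool)))) := by
    refine (Fintype.bijective_iff_surjective_and_card _).mpr ⟨hfsurj, ?_⟩
    rw [Fintype.card_fin, ← Nat.card_eq_fintype_card, hJ]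
  have hbl : ∀ y : Fin m × Fin 2 × Bool, (αh y).1 = y.1 := by
    intro y
    have h1 : (Quotient.mk'' (αh y)
        : Quotient (orbitRel (Subgroup.closure {deltaHat m, αh, betaHat m})
            (Fin m × Fin 2 × Bool))) = Quotient.mk'' y := Stmt9Aux.mk_smul_eq hαT y
    apply hfbij.1
    calc (Quotient.mk'' (((αh y).1, 0, false) : Fin m × Fin 2 × Bool)
        : Quotient (orbitRel (Subgroup.closure {deltaHat m, αh, betaHat m})
            (Fin m × Fin 2 × Bool)))
        = Quotient.mk'' (αh y) := (hblockrel (αh y).1 (αh y).2.1 (αh y).2.2).symm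
    _ = Quotient.mk'' y := h1
    _ = Quotient.mk'' ((y.1, 0, false) : Fin m × Fin 2 × Bool) := hblockrel y.1 y.2.1 y.2.2
  -- trichotomy on each block
  have key := fun i => Stmt9Aux.block_cases αh αinv hαfp hbl i
  -- block preservation for the two products
  have hbl1 : ∀ y : Fin m × Fin 2 × Bool, ((deltaHat m * αh) y).1 = y.1 := fun y => hbl y
  have hbl2 : ∀ y : Fin m × Fin 2 × Bool, ((αh * betaHat m) y).1 = y.1 :=
    fun y => hbl (betaHat m y)
  letI : DecidableEq (Quotient (orbitRel (zpowers (deltaHat m * αh))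
      (Fin m × Fin 2 × Bool))) := Classical.decEq _
  letI : Fintype (Quotient (orbitRel (zpowers (deltaHat m * αh))
      (Fin m × Fin 2 × Bool))) := Fintype.ofFinite _
  letI : DecidableEq (Quotient (orbitRel (zpowers (αh * betaHat m))
      (Fin m × Fin 2 × Bool))) := Classical.decEq _
  letI : Fintype (Quotient (orbitRel (zpowers (αh * betaHat m))
      (Fin m × Fin 2 × Bool))) := Fintype.ofFinite _
  have hsum1 : permCycles (deltaHat m * αh) = ∑ i : Fin m, (Finset.univ.filter
      (fun c => Stmt9Aux.projQ (deltaHat m * αh) hbl1 c = i)).card := by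
    have h0 : permCycles (deltaHat m * αh)
        = Fintype.card (Quotient (orbitRel (zpowers (deltaHat m * αh))
            (Fin m × Fin 2 × Bool))) := Nat.card_eq_fintype_card
    rw [h0, ← Finset.card_univ]
    exact Finset.card_eq_sum_card_fiberwise (fun c _ => Finset.mem_univ _)
  have hsum2 : permCycles (αh * betaHat m) = ∑ i : Fin m, (Finset.univ.filter
      (fun c => Stmt9Aux.projQ (αh * betaHat m) hbl2 c = i)).card := by
    have h0 : permCycles (αh * betaHat m)
        = Fintype.card (Quotient (orbitRel (zpowers (αh * betaHat m))
            (Fin m × Fin 2 × Bool))) := Nat.card_eq_fintype_card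
    rw [h0, ← Finset.card_univ]
    exact Finset.card_eq_sum_card_fiberwise (fun c _ => Finset.mem_univ _)
  -- per-block orbit counts in the three cases
  have c1D : ∀ i : Fin m, (∀ (ε : Fin 2) (s : Bool), αh (i, ε, s) = (i, ε, !s)) →
      (Finset.univ.filter
        (fun c => Stmt9Aux.projQ (deltaHat m * αh) hbl1 c = i)).card = 4 := by
    intro i hD
    apply Stmt9Aux.fiber_four (deltaHat m * αh) hbl1 i
    intro p
    show deltaHat m (αh (i, p.1, p.2)) = (i, p.1, p.2)
    rw [hD p.1 p.2, Stmt9Aux.delta_apply]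
    simp
  have c2D : ∀ i : Fin m, (∀ (ε : Fin 2) (s : Bool), αh (i, ε, s) = (i, ε, !s)) →
      (Finset.univ.filter
        (fun c => Stmt9Aux.projQ (αh * betaHat m) hbl2 c = i)).card = 2 := by
    intro i hD
    apply Stmt9Aux.fiber_two (αh * betaHat m) hbl2 i (0, false) (1, true) (0, true) (1, false)
      (by decide) (by decide) (by decide) (by decide) (by decide)
    · show αh (betaHat m (i, 0, false)) = ((i, 1, true) : Fin m × Fin 2 × Bool)
      rw [Stmt9Aux.beta_apply]
      show αh (i, 1 - 0, false) = _
      rw [hone, hD 1 false]; rfl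
    · show αh (betaHat m (i, 1, true)) = ((i, 0, false) : Fin m × Fin 2 × Bool)
      rw [Stmt9Aux.beta_apply]
      show αh (i, 1 - 1, true) = _
      rw [hzero, hD 0 true]; rfl
    · show αh (betaHat m (i, 0, true)) = ((i, 1, false) : Fin m × Fin 2 × Bool)
      rw [Stmt9Aux.beta_apply]
      show αh (i, 1 - 0, true) = _
      rw [hone, hD 1 true]; rfl
    · show αh (betaHat m (i, 1, false)) = ((i, 0, true) : Fin m × Fin 2 × Bool)
      rw [Stmt9Aux.beta_apply]
      show αh (i, 1 - 1, false) = _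
      rw [hzero, hD 0 false]; rfl
  have c1B : ∀ i : Fin m, (∀ (ε : Fin 2) (s : Bool), αh (i, ε, s) = (i, 1 - ε, s)) →
      (Finset.univ.filter
        (fun c => Stmt9Aux.projQ (deltaHat m * αh) hbl1 c = i)).card = 2 := by
    intro i hB
    apply Stmt9Aux.fiber_two (deltaHat m * αh) hbl1 i (0, false) (1, true) (0, true) (1, false)
      (by decide) (by decide) (by decide) (by decide) (by decide)
    · show deltaHat m (αh (i, 0, false)) = ((i, 1, true) : Fin m × Fin 2 × Bool)
      rw [hB 0 false, hone]; rfl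
    · show deltaHat m (αh (i, 1, true)) = ((i, 0, false) : Fin m × Fin 2 × Bool)
      rw [hB 1 true, hzero]; rfl
    · show deltaHat m (αh (i, 0, true)) = ((i, 1, false) : Fin m × Fin 2 × Bool)
      rw [hB 0 true, hone]; rfl
    · show deltaHat m (αh (i, 1, false)) = ((i, 0, true) : Fin m × Fin 2 × Bool)
      rw [hB 1 false, hzero]; rfl
  have c2B : ∀ i : Fin m, (∀ (ε : Fin 2) (s : Bool), αh (i, ε, s) = (i, 1 - ε, s)) →
      (Finset.univ.filter
        (fun c => Stmt9Aux.projQ (αh * betaHat m) hbl2 c = i)).card = 4 := by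
    intro i hB
    apply Stmt9Aux.fiber_four (αh * betaHat m) hbl2 i
    intro p
    show αh (betaHat m (i, p.1, p.2)) = (i, p.1, p.2)
    rw [Stmt9Aux.beta_apply]
    show αh (i, 1 - p.1, p.2) = _
    rw [hB (1 - p.1) p.2, Stmt9Aux.fin2_sub_sub]
  have c1G : ∀ i : Fin m, (∀ (ε : Fin 2) (s : Bool), αh (i, ε, s) = (i, 1 - ε, !s)) →
      (Finset.univ.filter
        (fun c => Stmt9Aux.projQ (deltaHat m * αh) hbl1 c = i)).card = 2 := by
    intro i hG
    apply Stmt9Aux.fiber_two (deltaHat m * αh) hbl1 i (0, false) (1, false) (0, true) (1, true)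
      (by decide) (by decide) (by decide) (by decide) (by decide)
    · show deltaHat m (αh (i, 0, false)) = ((i, 1, false) : Fin m × Fin 2 × Bool)
      rw [hG 0 false, hone]; rfl
    · show deltaHat m (αh (i, 1, false)) = ((i, 0, false) : Fin m × Fin 2 × Bool)
      rw [hG 1 false, hzero]; rfl
    · show deltaHat m (αh (i, 0, true)) = ((i, 1, true) : Fin m × Fin 2 × Bool)
      rw [hG 0 true, hone]; rfl
    · show deltaHat m (αh (i, 1, true)) = ((i, 0, true) : Fin m × Fin 2 × Bool)
      rw [hG 1 true, hzero]; rfl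
  have c2G : ∀ i : Fin m, (∀ (ε : Fin 2) (s : Bool), αh (i, ε, s) = (i, 1 - ε, !s)) →
      (Finset.univ.filter
        (fun c => Stmt9Aux.projQ (αh * betaHat m) hbl2 c = i)).card = 2 := by
    intro i hG
    apply Stmt9Aux.fiber_two (αh * betaHat m) hbl2 i (0, false) (0, true) (1, false) (1, true)
      (by decide) (by decide) (by decide) (by decide) (by decide)
    · show αh (betaHat m (i, 0, false)) = ((i, 0, true) : Fin m × Fin 2 × Bool)
      rw [Stmt9Aux.beta_apply]
      show αh (i, 1 - 0, false) = _
      rw [hone, hG 1 false, hzero]; rfl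
    · show αh (betaHat m (i, 0, true)) = ((i, 0, false) : Fin m × Fin 2 × Bool)
      rw [Stmt9Aux.beta_apply]
      show αh (i, 1 - 0, true) = _
      rw [hone, hG 1 true, hzero]; rfl
    · show αh (betaHat m (i, 1, false)) = ((i, 1, true) : Fin m × Fin 2 × Bool)
      rw [Stmt9Aux.beta_apply]
      show αh (i, 1 - 1, false) = _
      rw [hzero, hG 0 false, hone]; rfl
    · show αh (betaHat m (i, 1, true)) = ((i, 1, false) : Fin m × Fin 2 × Bool)
      rw [Stmt9Aux.beta_apply]
      show αh (i, 1 - 1, true) = _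
      rw [hzero, hG 0 true, hone]; rfl
  -- no block can be of the third ("crossing") type
  have hnoG : ∀ i : Fin m, ¬ (∀ (ε : Fin 2) (s : Bool), αh (i, ε, s) = (i, 1 - ε, !s)) := by
    intro i hG
    have hle : ∀ j : Fin m, (Finset.univ.filter
          (fun c => Stmt9Aux.projQ (deltaHat m * αh) hbl1 c = j)).card
        + (Finset.univ.filter
          (fun c => Stmt9Aux.projQ (αh * betaHat m) hbl2 c = j)).card ≤ 6 := by
      intro j
      rcases key j with hD | hB | hG'
      · rw [c1D j hD, c2D j hD]
      · rw [c1B j hB, c2B j hB]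
      · rw [c1G j hG', c2G j hG']
        omega
    have hlt : ∑ j : Fin m, ((Finset.univ.filter
          (fun c => Stmt9Aux.projQ (deltaHat m * αh) hbl1 c = j)).card
        + (Finset.univ.filter
          (fun c => Stmt9Aux.projQ (αh * betaHat m) hbl2 c = j)).card)
        < ∑ _j : Fin m, 6 := by
      apply Finset.sum_lt_sum (fun j _ => hle j)
      exact ⟨i, Finset.mem_univ i, by rw [c1G i hG, c2G i hG]; omega⟩
    rw [Finset.sum_add_distrib, ← hsum1, ← hsum2, hab, Finset.sum_const,
      Finset.card_univ, Fintype.card_fin, smul_eq_mul] at hlt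
    omega
  have key' : ∀ i : Fin m, (∀ (ε : Fin 2) (s : Bool), αh (i, ε, s) = (i, ε, !s)) ∨
      (∀ (ε : Fin 2) (s : Bool), αh (i, ε, s) = (i, 1 - ε, s)) := by
    intro i
    rcases key i with h | h | h
    · exact Or.inl h
    · exact Or.inr h
    · exact absurd h (hnoG i)
  -- conclusion
  refine ⟨Finset.univ.filter (fun i => αh (i, 0, false) = (i, 1, false)), ?_⟩
  intro i ε s
  constructor
  · intro hi
    simp only [Finset.mem_filter, Finset.mem_univ, true_and] at hi
    rcases key' i with hD | hB
    · exfalso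
      rw [hD 0 false] at hi
      have h2 : (0 : Fin 2) = 1 := congrArg (fun z : Fin m × Fin 2 × Bool => z.2.1) hi
      exact absurd h2 (by decide)
    · show αh (i, ε, s) = betaHat m (i, ε, s)
      rw [Stmt9Aux.beta_apply]
      exact hB ε s
  · intro hi
    simp only [Finset.mem_filter, Finset.mem_univ, true_and] at hi
    rcases key' i with hD | hB
    · show αh (i, ε, s) = deltaHat m (i, ε, s)
      rw [Stmt9Aux.delta_apply]
      exact hD ε s
    · exfalso
      apply hi
      have h := hB 0 false
      rw [hone] at h
      exact h
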